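/- Under the uplink pilot model, with c_j := √(τp)·β_j/(1 + τp·Σ_{i=1}^K β_i) and θ_j := τp·β_j²/(1 + τp·Σ_{i=1}^K β_i), the channel-estimation error satisfies E[‖h_j − c_j·ỹ‖²] = L·(β_j − θ_j). -/

import Mathlib

open MeasureTheory ProbabilityTheory
open scoped BigOperators ComplexConjugate

noncomputable section

/-- `IsCNVec L θ z` means `z` is a complex Gaussian random vector `CN(0, θ I_L)`. -/
def IsCNVec {Ω : Type} [MeasureSpace Ω] (L : ℕ) (θ : ℝ) (z : Ω → Fin L → ℂ) : Prop :=
  (∀ i, Measurable fun ω => z ω i) ∧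
  iIndepFun (fun i ω => z ω i) (volume : Measure Ω) ∧
  (∀ i, IndepFun (fun ω => (z ω i).re) (fun ω => (z ω i).im) (volume : Measure Ω)) ∧
  (∀ i, Measure.map (fun ω => (z ω i).re) (volume : Measure Ω)
      = gaussianReal 0 (θ / 2).toNNReal) ∧
  (∀ i, Measure.map (fun ω => (z ω i).im) (volume : Measure Ω)
      = gaussianReal 0 (θ / 2).toNNReal)

open Real Filter Set
open scoped NNReal ENNReal


lemma my_integrable_sq_exp {b : ℝ} (hb : 0 < b) :
    Integrable (fun x : ℝ => x ^ 2 * Real.exp (-b * x ^ 2)) := by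
  have := integrable_rpow_mul_exp_neg_mul_sq hb (s := 2) (by norm_num)
  simpa [Real.rpow_two] using this

lemma my_tendsto_sq_exp {b : ℝ} (hb : 0 < b) :
    Tendsto (fun x : ℝ => x ^ 2 * Real.exp (-b * x ^ 2)) atTop (nhds 0) := by
  have h1 : Tendsto (fun y : ℝ => y * Real.exp (-y)) atTop (nhds 0) := by
    simpa using Real.tendsto_pow_mul_exp_neg_atTop_nhds_zero 1
  have h2 : Tendsto (fun x : ℝ => b * x ^ 2) atTop atTop :=
    (tendsto_pow_atTop two_ne_zero).const_mul_atTop hb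
  have h3 := (h1.comp h2).const_mul b⁻¹
  simp only [Function.comp_def] at h3
  have : (fun x : ℝ => x ^ 2 * Real.exp (-b * x ^ 2))
      = fun x : ℝ => b⁻¹ * (b * x ^ 2 * Real.exp (-(b * x ^ 2))) := by
    funext x
    rw [neg_mul]
    field_simp
  rw [this]
  simpa using h3

lemma my_tendsto_mul_exp {b : ℝ} (hb : 0 < b) :
    Tendsto (fun x : ℝ => x * Real.exp (-b * x ^ 2)) atTop (nhds 0) := by
  refine squeeze_zero' ?_ ?_ (my_tendsto_sq_exp hb)
  · filter_upwards [eventually_ge_atTop (0:ℝ)] with x hx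
    positivity
  · filter_upwards [eventually_ge_atTop (1:ℝ)] with x hx
    have : x ≤ x ^ 2 := by nlinarith
    exact mul_le_mul_of_nonneg_right this (Real.exp_nonneg _)

lemma my_integral_sq_exp {b : ℝ} (hb : 0 < b) :
    ∫ x : ℝ, x ^ 2 * Real.exp (-b * x ^ 2) = (2 * b)⁻¹ * Real.sqrt (π / b) := by
  set f : ℝ → ℝ := fun x => -(2 * b)⁻¹ * (x * Real.exp (-b * x ^ 2)) with hf
  set g : ℝ → ℝ := fun x => x ^ 2 * Real.exp (-b * x ^ 2)
      - (2 * b)⁻¹ * Real.exp (-b * x ^ 2) with hgdef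
  have hderiv : ∀ x : ℝ, HasDerivAt f (g x) x := by
    intro x
    have h1 : HasDerivAt (fun x : ℝ => -b * x ^ 2) (-b * (2 * x)) x := by
      simpa using ((hasDerivAt_pow 2 x).const_mul (-b))
    have h2 : HasDerivAt (fun x : ℝ => Real.exp (-b * x ^ 2))
        (Real.exp (-b * x ^ 2) * (-b * (2 * x))) x := h1.exp
    have h3 : HasDerivAt f (-(2 * b)⁻¹ * (1 * Real.exp (-b * x ^ 2) + id x * (Real.exp (-b * x ^ 2) * (-b * (2 * x))))) x :=
      ((hasDerivAt_id x).mul h2).const_mul (-(2 * b)⁻¹)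
    convert h3 using 1
    simp only [hgdef, id_eq]
    field_simp
    ring
  have hg : Integrable g :=
    (my_integrable_sq_exp hb).sub ((integrable_exp_neg_mul_sq hb).const_mul _)
  have htop : Tendsto f atTop (nhds 0) := by
    have := (my_tendsto_mul_exp hb).const_mul (-(2 * b)⁻¹)
    rw [mul_zero] at this
    exact this.congr fun x => by rw [hf]
  have hbot : Tendsto f atBot (nhds 0) := by
    have h := htop.comp tendsto_neg_atBot_atTop
    have heq : (f ∘ fun x : ℝ => -x) = fun x => -f x := by
      funext x; simp only [hf, Function.comp_apply]; ring_nf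
    rw [heq] at h
    simpa using h.neg
  have hIoi : ∫ x in Ioi (0:ℝ), g x = 0 - f 0 :=
    integral_Ioi_of_hasDerivAt_of_tendsto (hderiv 0).continuousAt.continuousWithinAt
      (fun x _ => hderiv x) hg.integrableOn htop
  have hIic : ∫ x in Iic (0:ℝ), g x = f 0 - 0 :=
    integral_Iic_of_hasDerivAt_of_tendsto (hderiv 0).continuousAt.continuousWithinAt
      (fun x _ => hderiv x) hg.integrableOn hbot
  have hzero : ∫ x : ℝ, g x = 0 := by
    rw [← intervalIntegral.integral_Iic_add_Ioi hg.integrableOn hg.integrableOn, hIoi, hIic]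
    ring
  have hsplit : ∫ x : ℝ, g x = (∫ x : ℝ, x ^ 2 * Real.exp (-b * x ^ 2))
      - (2 * b)⁻¹ * ∫ x : ℝ, Real.exp (-b * x ^ 2) := by
    rw [hgdef]
    rw [integral_sub (my_integrable_sq_exp hb) ((integrable_exp_neg_mul_sq hb).const_mul _),
      MeasureTheory.integral_const_mul]
  rw [hzero] at hsplit
  rw [integral_gaussian] at hsplit
  linarith

lemma my_int_mul_of_L2 {α : Type*} [MeasurableSpace α] {μ : Measure α} {f g : α → ℝ}
    (hf : MemLp f 2 μ) (hg : MemLp g 2 μ) : Integrable (fun x => f x * g x) μ := by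
  have h1 := ((hf.add hg).integrable_sq.sub hf.integrable_sq).sub hg.integrable_sq
  have h2 := h1.const_mul (1/2 : ℝ)
  refine h2.congr (ae_of_all _ fun x => ?_)
  simp only [Pi.add_apply, Pi.sub_apply]
  ring

lemma my_gaussPDF_eq (v : ℝ≥0) (hv : v ≠ 0) (x : ℝ) :
    gaussianPDFReal 0 v x = (Real.sqrt (2 * π * v))⁻¹ * Real.exp (-(2 * (v:ℝ))⁻¹ * x ^ 2) := by
  rw [gaussianPDFReal]
  congr 1
  rw [sub_zero]
  congr 1
  rw [neg_div, neg_mul]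
  congr 1
  rw [div_eq_inv_mul]

lemma my_gauss_repr (v : ℝ≥0) (hv : v ≠ 0) {E : Type*} [NormedAddCommGroup E]
    [NormedSpace ℝ E] (g : ℝ → E) :
    ∫ x, g x ∂(gaussianReal 0 v) = ∫ x, gaussianPDFReal 0 v x • g x := by
  rw [gaussianReal_of_var_ne_zero 0 hv, gaussianPDF_def]
  have hmeas : Measurable fun x => (gaussianPDFReal 0 v x).toNNReal :=
    (measurable_gaussianPDFReal 0 v).real_toNNReal
  have : (fun x => ENNReal.ofReal (gaussianPDFReal 0 v x))
      = fun x => ((gaussianPDFReal 0 v x).toNNReal : ℝ≥0∞) := rfl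
  rw [this, integral_withDensity_eq_integral_smul hmeas]
  congr 1
  funext x
  rw [NNReal.smul_def, Real.coe_toNNReal _ (gaussianPDFReal_nonneg 0 v x)]

lemma my_gauss_int_id (v : ℝ≥0) : ∫ x, x ∂(gaussianReal 0 v) = 0 := by
  by_cases hv : v = 0
  · simp [hv]
  rw [my_gauss_repr v hv]
  have hodd : ∀ x : ℝ, gaussianPDFReal 0 v (-x) • (-x) = -(gaussianPDFReal 0 v x • x) := by
    intro x
    have : gaussianPDFReal 0 v (-x) = gaussianPDFReal 0 v x := by
      simp [gaussianPDFReal, neg_sq]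
    rw [this]; simp
  have h := integral_neg_eq_self (fun x => gaussianPDFReal 0 v x • x) (volume : Measure ℝ)
  simp only [hodd, integral_neg] at h
  linarith

lemma my_gauss_int_sq (v : ℝ≥0) : ∫ x, x ^ 2 ∂(gaussianReal 0 v) = v := by
  by_cases hv : v = 0
  · simp [hv]
  have hvpos : (0:ℝ) < v := lt_of_le_of_ne v.2 (by exact_mod_cast Ne.symm hv)
  have hb : (0:ℝ) < (2 * (v:ℝ))⁻¹ := by positivity
  rw [my_gauss_repr v hv]
  have : (fun x : ℝ => gaussianPDFReal 0 v x • x ^ 2)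
      = fun x : ℝ => (Real.sqrt (2 * π * v))⁻¹ * (x ^ 2 * Real.exp (-(2 * (v:ℝ))⁻¹ * x ^ 2)) := by
    funext x
    rw [my_gaussPDF_eq v hv, smul_eq_mul]
    ring
  rw [this, MeasureTheory.integral_const_mul, my_integral_sq_exp hb]
  have h2v : (2 * ((2 * (v:ℝ))⁻¹))⁻¹ = v := by
    field_simp
  have hπ : π / (2 * (v:ℝ))⁻¹ = 2 * π * v := by
    field_simp
  rw [h2v, hπ]
  have hs : Real.sqrt (2 * π * v) ≠ 0 := by
    refine Real.sqrt_ne_zero'.mpr ?_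
    positivity
  field_simp

lemma my_gauss_memLp (v : ℝ≥0) : MemLp id 2 (gaussianReal 0 v) := by
  by_cases hv : v = 0
  · rw [memLp_two_iff_integrable_sq aestronglyMeasurable_id]
    simp only [hv, gaussianReal_zero_var]
    have hae : (fun x : ℝ => (id x) ^ 2) =ᵐ[Measure.dirac (0:ℝ)] fun _ => (0:ℝ) := by
      filter_upwards [ae_eq_dirac' (measurable_id (α := ℝ))] with x hx
      simpa using hx
    exact (integrable_const (0:ℝ)).congr hae.symm
  have hvpos : (0:ℝ) < v := lt_of_le_of_ne v.2 (by exact_mod_cast Ne.symm hv)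
  have hb : (0:ℝ) < (2 * (v:ℝ))⁻¹ := by positivity
  rw [memLp_two_iff_integrable_sq aestronglyMeasurable_id]
  rw [gaussianReal_of_var_ne_zero 0 hv]
  rw [integrable_withDensity_iff (measurable_gaussianPDF 0 v) (ae_of_all _ fun x => ENNReal.ofReal_lt_top)]
  have : (fun x : ℝ => (id x) ^ 2 * (gaussianPDF 0 v x).toReal)
      = fun x : ℝ => (Real.sqrt (2 * π * v))⁻¹ * (x ^ 2 * Real.exp (-(2 * (v:ℝ))⁻¹ * x ^ 2)) := by
    funext x
    rw [gaussianPDF, ENNReal.toReal_ofReal (gaussianPDFReal_nonneg 0 v x), my_gaussPDF_eq v hv, id]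
    ring
  rw [this]
  exact (my_integrable_sq_exp hb).const_mul _

section RV
variable {Ω : Type} [MeasureSpace Ω] [IsProbabilityMeasure (volume : Measure Ω)]

lemma my_rv_memLp {X : Ω → ℝ} {v : ℝ≥0} (hX : Measurable X)
    (hmap : Measure.map X (volume : Measure Ω) = gaussianReal 0 v) :
    MemLp X 2 (volume : Measure Ω) := by
  have := (memLp_map_measure_iff (f := X) (g := id) aestronglyMeasurable_id
    hX.aemeasurable).mp (by rw [hmap]; exact my_gauss_memLp v)
  simpa [Function.comp] using this

lemma my_rv_mean {X : Ω → ℝ} {v : ℝ≥0} (hX : Measurable X)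
    (hmap : Measure.map X (volume : Measure Ω) = gaussianReal 0 v) :
    ∫ ω, X ω = 0 := by
  have := integral_map (μ := (volume : Measure Ω)) (φ := X) (f := fun y : ℝ => y) hX.aemeasurable
    aestronglyMeasurable_id
  rw [hmap] at this
  rw [← this, my_gauss_int_id]

lemma my_rv_sq {X : Ω → ℝ} {v : ℝ≥0} (hX : Measurable X)
    (hmap : Measure.map X (volume : Measure Ω) = gaussianReal 0 v) :
    ∫ ω, (X ω) ^ 2 = v := by
  have := integral_map (μ := (volume : Measure Ω)) (φ := X) (f := fun y : ℝ => y ^ 2) hX.aemeasurable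
    (measurable_id.pow_const 2).aestronglyMeasurable
  rw [hmap] at this
  rw [← this, my_gauss_int_sq]

/-- Key lemma: second moment of a real-coefficient linear combination of independent
zero-mean complex Gaussian entries. -/
lemma my_key {ι : Type} [Fintype ι] [DecidableEq ι]
    (Z : ι → Ω → ℂ) (vv : ι → ℝ) (hvv : ∀ u, 0 ≤ vv u)
    (hmeas : ∀ u, Measurable (Z u))
    (hre : ∀ u, Measure.map (fun ω => (Z u ω).re) (volume : Measure Ω)
        = gaussianReal 0 (vv u / 2).toNNReal)
    (him : ∀ u, Measure.map (fun ω => (Z u ω).im) (volume : Measure Ω)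
        = gaussianReal 0 (vv u / 2).toNNReal)
    (hind : ∀ u w, u ≠ w → IndepFun (Z u) (Z w) (volume : Measure Ω))
    (a : ι → ℝ) :
    Integrable (fun ω => Complex.normSq (∑ u, (a u : ℂ) * Z u ω)) (volume : Measure Ω) ∧
    ∫ ω, Complex.normSq (∑ u, (a u : ℂ) * Z u ω) = ∑ u, a u ^ 2 * vv u := by
  set X : ι → Ω → ℝ := fun u ω => (Z u ω).re with hX
  set Y : ι → Ω → ℝ := fun u ω => (Z u ω).im with hY
  have hXmeas : ∀ u, Measurable (X u) := fun u => (Complex.measurable_re).comp (hmeas u)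
  have hYmeas : ∀ u, Measurable (Y u) := fun u => (Complex.measurable_im).comp (hmeas u)
  have hXL2 : ∀ u, MemLp (X u) 2 (volume : Measure Ω) := fun u => my_rv_memLp (hXmeas u) (hre u)
  have hYL2 : ∀ u, MemLp (Y u) 2 (volume : Measure Ω) := fun u => my_rv_memLp (hYmeas u) (him u)
  have hXmean : ∀ u, ∫ ω, X u ω = 0 := fun u => my_rv_mean (hXmeas u) (hre u)
  have hYmean : ∀ u, ∫ ω, Y u ω = 0 := fun u => my_rv_mean (hYmeas u) (him u)
  have hhalf : ∀ u, ((vv u / 2).toNNReal : ℝ) = vv u / 2 := fun u =>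
    Real.coe_toNNReal _ (by linarith [hvv u])
  have hXsq : ∀ u, ∫ ω, (X u ω) ^ 2 = vv u / 2 := fun u => by
    rw [my_rv_sq (hXmeas u) (hre u), hhalf]
  have hYsq : ∀ u, ∫ ω, (Y u ω) ^ 2 = vv u / 2 := fun u => by
    rw [my_rv_sq (hYmeas u) (him u), hhalf]
  -- pointwise expansion
  have hpt : ∀ ω, Complex.normSq (∑ u, (a u : ℂ) * Z u ω)
      = ∑ u, ∑ w, (a u * a w) * (X u ω * X w ω + Y u ω * Y w ω) := by
    intro ω
    rw [Complex.normSq_apply]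
    have hre' : (∑ u, (a u : ℂ) * Z u ω).re = ∑ u, a u * X u ω := by
      rw [Complex.re_sum]
      exact Finset.sum_congr rfl fun u _ => by
        simp [Complex.mul_re, hX]
    have him' : (∑ u, (a u : ℂ) * Z u ω).im = ∑ u, a u * Y u ω := by
      rw [Complex.im_sum]
      exact Finset.sum_congr rfl fun u _ => by
        simp [Complex.mul_im, hY]
    rw [hre', him', Finset.sum_mul_sum, Finset.sum_mul_sum, ← Finset.sum_add_distrib]
    refine Finset.sum_congr rfl fun u _ => ?_
    rw [← Finset.sum_add_distrib]
    exact Finset.sum_congr rfl fun w _ => by ring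
  -- integrability of each term
  have hint : ∀ u w : ι, Integrable
      (fun ω => (a u * a w) * (X u ω * X w ω + Y u ω * Y w ω)) (volume : Measure Ω) := by
    intro u w
    exact ((my_int_mul_of_L2 (hXL2 u) (hXL2 w)).add (my_int_mul_of_L2 (hYL2 u) (hYL2 w))).const_mul _
  have hintsum : Integrable (fun ω => Complex.normSq (∑ u, (a u : ℂ) * Z u ω))
      (volume : Measure Ω) := by
    have : (fun ω => Complex.normSq (∑ u, (a u : ℂ) * Z u ω))
        = fun ω => ∑ u, ∑ w, (a u * a w) * (X u ω * X w ω + Y u ω * Y w ω) := funext hpt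
    rw [this]
    exact integrable_finset_sum _ fun u _ => integrable_finset_sum _ fun w _ => hint u w
  refine ⟨hintsum, ?_⟩
  calc ∫ ω, Complex.normSq (∑ u, (a u : ℂ) * Z u ω)
      = ∫ ω, ∑ u, ∑ w, (a u * a w) * (X u ω * X w ω + Y u ω * Y w ω) := by
        congr 1; exact funext hpt
    _ = ∑ u, ∑ w, ∫ ω, (a u * a w) * (X u ω * X w ω + Y u ω * Y w ω) := by
        rw [integral_finset_sum _ fun u _ => integrable_finset_sum _ fun w _ => hint u w]
        exact Finset.sum_congr rfl fun u _ => integral_finset_sum _ fun w _ => hint u w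
    _ = ∑ u, a u ^ 2 * vv u := by
        refine Finset.sum_congr rfl fun u _ => ?_
        rw [Finset.sum_eq_single u]
        · rw [MeasureTheory.integral_const_mul,
            integral_add (my_int_mul_of_L2 (hXL2 u) (hXL2 u)) (my_int_mul_of_L2 (hYL2 u) (hYL2 u))]
          have e1 : ∫ ω, X u ω * X u ω = vv u / 2 := by
            rw [← hXsq u]; congr 1; funext ω; ring
          have e2 : ∫ ω, Y u ω * Y u ω = vv u / 2 := by
            rw [← hYsq u]; congr 1; funext ω; ring
          rw [e1, e2]; ring
        · intro w _ hw
          have hZind : IndepFun (Z u) (Z w) (volume : Measure Ω) := hind u w (Ne.symm hw)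
          have hXX : ∫ ω, X u ω * X w ω = 0 := by
            have hi : IndepFun (X u) (X w) (volume : Measure Ω) :=
              hZind.comp Complex.measurable_re Complex.measurable_re
            have h2 := hi.integral_mul_eq_mul_integral (hXmeas u).aestronglyMeasurable
              (hXmeas w).aestronglyMeasurable
            rw [show (X u * X w : Ω → ℝ) = fun ω => X u ω * X w ω from rfl] at h2
            rw [h2, hXmean u, hXmean w, mul_zero]
          have hYY : ∫ ω, Y u ω * Y w ω = 0 := by
            have hi : IndepFun (Y u) (Y w) (volume : Measure Ω) :=
              hZind.comp Complex.measurable_im Complex.measurable_im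
            have h2 := hi.integral_mul_eq_mul_integral (hYmeas u).aestronglyMeasurable
              (hYmeas w).aestronglyMeasurable
            rw [show (Y u * Y w : Ω → ℝ) = fun ω => Y u ω * Y w ω from rfl] at h2
            rw [h2, hYmean u, hYmean w, mul_zero]
          rw [MeasureTheory.integral_const_mul,
            integral_add (my_int_mul_of_L2 (hXL2 u) (hXL2 w)) (my_int_mul_of_L2 (hYL2 u) (hYL2 w)),
            hXX, hYY]
          ring
        · intro hu; exact absurd (Finset.mem_univ u) hu

end RV

/-- Uplink pilot model: the channel-estimation error satisfies
`E[‖h_j − c_j·ỹ‖²] = L·(β_j − θ_j)`. -/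
theorem mmse_estimation_error_mean_square
    {Ω : Type} [MeasureSpace Ω] [IsProbabilityMeasure (volume : Measure Ω)]
    (L K : ℕ) (hL : 0 < L) (hK : 0 < K) (τp : ℝ) (hτp : 0 < τp)
    (β : Fin K → ℝ) (hβ : ∀ k, 0 < β k)
    (h : Fin K → Ω → Fin L → ℂ) (nv : Ω → Fin L → ℂ)
    (hh : ∀ k, IsCNVec L (β k) (h k)) (hn : IsCNVec L 1 nv)
    (hindep : iIndepFun
      (Sum.elim (fun k ω => h k ω) (fun _ ω => nv ω) : Fin K ⊕ Unit → Ω → Fin L → ℂ)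
      (volume : Measure Ω))
    (ytil : Ω → Fin L → ℂ)
    (hytil : ∀ ω i, ytil ω i = (Real.sqrt τp : ℂ) * ∑ k, h k ω i + nv ω i)
    (j : Fin K)
    (c θj : ℝ)
    (hc : c = Real.sqrt τp * β j / (1 + τp * ∑ i, β i))
    (hθj : θj = τp * β j ^ 2 / (1 + τp * ∑ i, β i)) :
    ∫ ω, ∑ i, Complex.normSq (h j ω i - (c : ℂ) * ytil ω i) = (L : ℝ) * (β j - θj) := by
  classical
  set F : Fin K ⊕ Unit → Ω → Fin L → ℂ :=
    Sum.elim (fun k ω => h k ω) (fun _ ω => nv ω) with hF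
  set coef : Fin K ⊕ Unit → ℝ :=
    Sum.elim (fun k => (if k = j then (1:ℝ) else 0) - c * Real.sqrt τp) (fun _ => -c) with hcoef
  set vv : Fin K ⊕ Unit → ℝ := Sum.elim β (fun _ => (1:ℝ)) with hvvdef
  have hvv : ∀ u, 0 ≤ vv u := by
    rintro (k | u)
    · exact (hβ k).le
    · exact zero_le_one
  have hmeas : ∀ u (i : Fin L), Measurable (fun ω => F u ω i) := by
    rintro (k | u) i
    · exact (hh k).1 i
    · exact hn.1 i
  have hre : ∀ u (i : Fin L), Measure.map (fun ω => (F u ω i).re) (volume : Measure Ω)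
      = gaussianReal 0 (vv u / 2).toNNReal := by
    rintro (k | u) i
    · exact (hh k).2.2.2.1 i
    · exact hn.2.2.2.1 i
  have him : ∀ u (i : Fin L), Measure.map (fun ω => (F u ω i).im) (volume : Measure Ω)
      = gaussianReal 0 (vv u / 2).toNNReal := by
    rintro (k | u) i
    · exact (hh k).2.2.2.2 i
    · exact hn.2.2.2.2 i
  have hind : ∀ (i : Fin L) u w, u ≠ w →
      IndepFun (fun ω => F u ω i) (fun ω => F w ω i) (volume : Measure Ω) := by
    intro i u w huw
    exact (hindep.indepFun huw).comp (measurable_pi_apply i) (measurable_pi_apply i)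
  have key : ∀ i : Fin L,
      Integrable (fun ω => Complex.normSq (∑ u, (coef u : ℂ) * F u ω i)) (volume : Measure Ω) ∧
      ∫ ω, Complex.normSq (∑ u, (coef u : ℂ) * F u ω i) = ∑ u, coef u ^ 2 * vv u :=
    fun i => my_key (fun u ω => F u ω i) vv hvv (fun u => hmeas u i)
      (fun u => hre u i) (fun u => him u i) (hind i) coef
  have hpt : ∀ ω (i : Fin L), h j ω i - (c:ℂ) * ytil ω i = ∑ u, (coef u : ℂ) * F u ω i := by
    intro ω i
    rw [hytil ω i, Fintype.sum_sum_type]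
    have h1 : ∀ k : Fin K, ((coef (Sum.inl k) : ℝ) : ℂ) * F (Sum.inl k) ω i
        = (if k = j then h k ω i else 0) - ((c * Real.sqrt τp : ℝ) : ℂ) * h k ω i := by
      intro k
      simp only [hcoef, hF, Sum.elim_inl]
      split_ifs with hkj
      · push_cast; ring
      · push_cast; ring
    rw [Finset.sum_congr rfl (fun k _ => h1 k), Finset.sum_sub_distrib,
      Finset.sum_ite_eq' Finset.univ j (fun k => h k ω i)]
    have h2 : ∑ x : Unit, ((coef (Sum.inr x) : ℝ) : ℂ) * F (Sum.inr x) ω i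
        = -(c:ℂ) * nv ω i := by
      simp [hcoef, hF]
    rw [h2, ← Finset.mul_sum]
    simp only [Finset.mem_univ, if_true]
    push_cast
    ring
  have hmain : ∫ ω, ∑ i, Complex.normSq (h j ω i - (c : ℂ) * ytil ω i)
      = (L : ℝ) * ∑ u, coef u ^ 2 * vv u := by
    have : (fun ω => ∑ i, Complex.normSq (h j ω i - (c : ℂ) * ytil ω i))
        = fun ω => ∑ i, Complex.normSq (∑ u, (coef u : ℂ) * F u ω i) := by
      funext ω
      exact Finset.sum_congr rfl fun i _ => by rw [hpt ω i]
    rw [this, integral_finset_sum _ (fun i _ => (key i).1)]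
    rw [Finset.sum_congr rfl (fun i _ => (key i).2)]
    rw [Finset.sum_const, Finset.card_univ, Fintype.card_fin, nsmul_eq_mul]
  rw [hmain]
  congr 1
  -- algebra
  have hsum : (0:ℝ) ≤ ∑ i, β i := Finset.sum_nonneg fun i _ => (hβ i).le
  have hS : (0:ℝ) < 1 + τp * ∑ i, β i := by positivity
  have hS0 : (1 + τp * ∑ i, β i) ≠ 0 := ne_of_gt hS
  have hr : Real.sqrt τp * Real.sqrt τp = τp := Real.mul_self_sqrt hτp.le
  have hexp : ∑ u, coef u ^ 2 * vv u
      = (1 - 2 * (c * Real.sqrt τp)) * β j + (c * Real.sqrt τp) ^ 2 * (∑ i, β i) + c ^ 2 := by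
    rw [Fintype.sum_sum_type]
    have h1 : ∀ k : Fin K, coef (Sum.inl k) ^ 2 * vv (Sum.inl k)
        = (if k = j then (1 - 2 * (c * Real.sqrt τp)) * β k else 0)
          + (c * Real.sqrt τp) ^ 2 * β k := by
      intro k
      simp only [hcoef, hvvdef, Sum.elim_inl]
      split_ifs with hkj
      · ring
      · ring
    rw [Finset.sum_congr rfl (fun k _ => h1 k), Finset.sum_add_distrib,
      Finset.sum_ite_eq' Finset.univ j (fun k => (1 - 2 * (c * Real.sqrt τp)) * β k),
      ← Finset.mul_sum]
    simp only [Finset.mem_univ, if_true]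
    have h2 : ∑ x : Unit, coef (Sum.inr x) ^ 2 * vv (Sum.inr x) = c ^ 2 := by
      simp [hcoef, hvvdef]
    rw [h2]
  rw [hexp, hc, hθj]
  set s := Real.sqrt τp with hs
  rw [← hr] at hS0 ⊢
  field_simp
  ring
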